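/- Let κ ≥ 3 be an odd prime. Then [ℚ(sin(π/κ)) : ℚ(sin²(π/κ))] = 2 and [ℚ(sin²(π/κ)) : ℚ] = (κ-1)/2. -/

import Mathlib

set_option synthInstance.maxHeartbeats 800000
set_option maxHeartbeats 1600000

open IntermediateField Polynomial

private lemma quad_finrank {F E : Type*} [Field F] [Field E] [Algebra F E] (α : E) (b c : F)
    (hroot : α ^ 2 + algebraMap F E b * α + algebraMap F E c = 0)
    (hα : α ∉ Set.range (algebraMap F E)) :
    Module.finrank F F⟮α⟯ = 2 := by
  set p : F[X] := X ^ 2 + C b * X + C c with hp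
  have hpm : p.Monic := by
    unfold p
    monicity!
  have haev : aeval α p = 0 := by
    simp only [hp, map_add, map_pow, map_mul, aeval_X, aeval_C, ← hroot]
  have hint : IsIntegral F α := ⟨p, hpm, by simpa [aeval_def] using haev⟩
  have hdeg : (minpoly F α).natDegree ≤ 2 := by
    have h1 := minpoly.degree_le_of_ne_zero F α hpm.ne_zero haev
    have h2 : p.natDegree = 2 := by unfold p; compute_degree!
    calc (minpoly F α).natDegree ≤ p.natDegree := natDegree_le_natDegree h1
    _ = 2 := h2
  have hne1 : (minpoly F α).natDegree ≠ 1 := by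
    intro h
    exact hα (RingHom.mem_range.mp ((minpoly.natDegree_eq_one_iff).mp h))
  have hpos := minpoly.natDegree_pos hint
  rw [IntermediateField.adjoin.finrank hint]
  omega

open Complex in
private lemma conj_adjoin_real (c : ℝ) {z : ℂ} (hz : z ∈ ℚ⟮(c : ℂ)⟯) :
    (starRingEnd ℂ) z = z := by
  induction hz using IntermediateField.adjoin_induction with
  | mem x hx => rw [Set.mem_singleton_iff.mp hx, conj_ofReal]
  | algebraMap q => simp
  | add x y _ _ hx hy => rw [map_add, hx, hy]
  | inv x _ hx => rw [map_inv₀, hx]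
  | mul x y _ _ hx hy => rw [map_mul, hx, hy]

open Complex in
private lemma key17 (κ : ℕ) (hκ : κ.Prime) (hodd : Odd κ) (h3 : 3 ≤ κ)
    (cr sr : ℝ) (hcrdef : cr = Real.cos (2 * Real.pi / κ))
    (hsrdef : sr = Real.sin (Real.pi / κ)) :
    Module.finrank ℚ ℚ⟮((cr : ℝ) : ℂ)⟯ = (κ - 1) / 2 ∧
    ((sr : ℝ) : ℂ) ∉ ℚ⟮((cr : ℝ) : ℂ)⟯ := by
  subst hcrdef hsrdef
  have hκ0 : (κ:ℂ) ≠ 0 := Nat.cast_ne_zero.mpr (by omega)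
  set n : ℕ := 4 * κ with hn
  have hn0 : n ≠ 0 := by omega
  set ζ : ℂ := Complex.exp (2 * Real.pi * I / n) with hζdef
  have hζ : IsPrimitiveRoot ζ n := Complex.isPrimitiveRoot_exp n hn0
  have hζ4 : ζ ^ 4 = Complex.exp (2 * Real.pi * I / κ) := by
    rw [hζdef, ← Complex.exp_nat_mul]
    congr 1
    have : (n:ℂ) = 4 * κ := by push_cast [hn]; ring
    rw [this]
    field_simp
    ring
  have hζκI : ζ ^ κ = I := by
    rw [hζdef, ← Complex.exp_nat_mul]
    have : (κ:ℂ) * (2 * Real.pi * I / n) = (Real.pi / 2 : ℝ) * I := by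
      have : (n:ℂ) = 4 * κ := by push_cast [hn]; ring
      rw [this]
      push_cast
      field_simp
      ring
    rw [this, Complex.exp_mul_I, ← Complex.ofReal_cos, ← Complex.ofReal_sin,
      Real.cos_pi_div_two, Real.sin_pi_div_two]
    simp
  have hcval : ((Real.cos (2 * Real.pi / κ) : ℝ) : ℂ) = (ζ ^ 4 + (ζ ^ 4)⁻¹) / 2 := by
    rw [Complex.ofReal_cos, Complex.cos, hζ4, ← Complex.exp_neg]
    congr 2
    · congr 1; push_cast; ring
    · congr 1; push_cast; ring
  have hsval : ((Real.sin (Real.pi / κ) : ℝ) : ℂ) = ((ζ ^ 2)⁻¹ - ζ ^ 2) * I / 2 := by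
    have hζ2 : ζ ^ 2 = Complex.exp (Real.pi * I / κ) := by
      rw [hζdef, ← Complex.exp_nat_mul]
      congr 1
      have : (n:ℂ) = 4 * κ := by push_cast [hn]; ring
      rw [this]
      field_simp
      ring
    rw [Complex.ofReal_sin, Complex.sin, hζ2, ← Complex.exp_neg]
    congr 3
    · congr 1; push_cast; ring
    · congr 1; push_cast; ring
  set ζκ : ℂ := ζ ^ 4 with hζκdef
  have hκpos : 0 < κ := by omega
  have hζκ : IsPrimitiveRoot ζκ κ := by
    rw [hζ4]; exact Complex.isPrimitiveRoot_exp κ (by omega)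
  have hintζκ : IsIntegral ℚ ζκ := (hζκ.isIntegral hκpos).tower_top
  have hfinE : Module.finrank ℚ ℚ⟮ζκ⟯ = κ - 1 := by
    rw [IntermediateField.adjoin.finrank hintζκ, ← cyclotomic_eq_minpoly_rat hζκ hκpos,
      natDegree_cyclotomic, Nat.totient_prime hκ]
  set c : ℂ := ((Real.cos (2 * Real.pi / κ) : ℝ) : ℂ) with hc
  have hζκ0 : ζκ ≠ 0 := by rw [hζ4]; exact Complex.exp_ne_zero _
  have hcmem : c ∈ ℚ⟮ζκ⟯ := by
    rw [hcval]
    have hg := IntermediateField.mem_adjoin_simple_self ℚ ζκ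
    exact div_mem (add_mem hg (inv_mem hg)) (by exact ofNat_mem _ 2)
  set K : IntermediateField ℚ ℂ := ℚ⟮c⟯ with hK
  have hKE : K ≤ ℚ⟮ζκ⟯ := by rw [hK, IntermediateField.adjoin_simple_le_iff]; exact hcmem
  have hζκnotK : ζκ ∉ Set.range (algebraMap K ℂ) := by
    rintro ⟨y, hy⟩
    have hfix : (starRingEnd ℂ) ζκ = ζκ := by
      rw [← hy]
      exact conj_adjoin_real _ y.2
    have hconj : (starRingEnd ℂ) ζκ = ζκ⁻¹ := by
      rw [hζ4, ← Complex.exp_conj, ← Complex.exp_neg]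
      congr 1
      simp only [map_div₀, map_mul, Complex.conj_I, Complex.conj_ofReal, map_ofNat, map_natCast]
      ring
    rw [hconj] at hfix
    have h2 : ζκ ^ 2 = 1 := by
      rw [sq]
      nth_rewrite 2 [← hfix]
      exact mul_inv_cancel₀ hζκ0
    have := Nat.le_of_dvd (by norm_num) (hζκ.pow_eq_one_iff_dvd 2 |>.mp h2)
    omega
  have hquadK : Module.finrank K K⟮ζκ⟯ = 2 := by
    have hcK : c ∈ K := IntermediateField.mem_adjoin_simple_self ℚ c
    refine quad_finrank ζκ (-(2 * ⟨c, hcK⟩)) 1 ?_ hζκnotK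
    have h1 : algebraMap K ℂ (-(2 * ⟨c, hcK⟩)) = -(2 * c) := by
      rw [map_neg, map_mul, map_ofNat]
      rfl
    have h2 : algebraMap K ℂ 1 = 1 := map_one _
    rw [h1, h2, hcval]
    field_simp
    ring
  have hrestrict : (K⟮ζκ⟯).restrictScalars ℚ = ℚ⟮ζκ⟯ := by
    rw [hK]
    refine (IntermediateField.adjoin_simple_adjoin_simple (F := ℚ) (α := c) (β := ζκ)).trans ?_
    apply le_antisymm
    · rw [IntermediateField.adjoin_le_iff]
      rintro x hx
      rcases hx with rfl | rfl
      · exact hcmem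
      · exact IntermediateField.mem_adjoin_simple_self ℚ ζκ
    · exact IntermediateField.adjoin.mono ℚ _ _ (by simp)
  haveI : FiniteDimensional K K⟮ζκ⟯ :=
    IntermediateField.adjoin.finiteDimensional (hintζκ.tower_top)
  have htower : Module.finrank ℚ K * 2 = κ - 1 := by
    rw [← hquadK, Module.finrank_mul_finrank ℚ K K⟮ζκ⟯]
    rw [← hrestrict] at hfinE
    exact hfinE
  have hKfin : Module.finrank ℚ K = (κ - 1) / 2 := by omega
  -- Part D
  set sC : ℂ := ((Real.sin (Real.pi / κ) : ℝ) : ℂ) with hsCdef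
  have hζint : IsIntegral ℚ ζ := ((hζ.isIntegral (by omega)).tower_top)
  have hcop : Nat.Coprime (2 * κ + 1) n := by
    rw [hn, show 4 * κ = 4 * κ by rfl]
    refine Nat.Coprime.mul_right ?_ ?_
    · have h4 : (4 : ℕ) = 2 ^ 2 := by norm_num
      rw [h4]
      exact Nat.Coprime.pow_right 2 (Nat.coprime_two_right.mpr ⟨κ, by ring⟩)
    · have := Nat.coprime_add_mul_left_left 1 κ 2
      simpa [Nat.add_comm, Nat.mul_comm] using this.mpr (Nat.coprime_one_left κ)
  set ζ' : ℂ := ζ ^ (2 * κ + 1) with hζ'def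
  have hζ' : IsPrimitiveRoot ζ' n := hζ.pow_of_coprime _ hcop
  have hmin : minpoly ℚ ζ = cyclotomic n ℚ := (cyclotomic_eq_minpoly_rat hζ (by omega)).symm
  have hroot : ζ' ∈ (minpoly ℚ ζ).aroots ℂ := by
    rw [hmin, Polynomial.mem_aroots]
    refine ⟨cyclotomic_ne_zero n ℚ, ?_⟩
    rw [aeval_def, eval₂_eq_eval_map, map_cyclotomic]
    exact hζ'.isRoot_cyclotomic (by omega)
  set τ : (ℚ⟮ζ⟯ →ₐ[ℚ] ℂ) :=
    (IntermediateField.algHomAdjoinIntegralEquiv ℚ hζint).symm ⟨ζ', hroot⟩ with hτdef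
  have hτgen : τ (IntermediateField.AdjoinSimple.gen ℚ ζ) = ζ' :=
    IntermediateField.algHomAdjoinIntegralEquiv_symm_apply_gen ℚ hζint _
  have hζn : ζ ^ n = 1 := hζ.pow_eq_one
  have hp4 : ζ' ^ 4 = ζ ^ 4 := by
    rw [hζ'def, ← pow_mul, show (2 * κ + 1) * 4 = n * 2 + 4 by rw [hn]; ring,
      pow_add, pow_mul, hζn, one_pow, one_mul]
  have hp2 : ζ' ^ 2 = ζ ^ 2 := by
    rw [hζ'def, ← pow_mul, show (2 * κ + 1) * 2 = n * 1 + 2 by rw [hn]; ring,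
      pow_add, pow_mul, hζn, one_pow, one_mul]
  obtain ⟨j, hj⟩ := hodd
  have hpκ : ζ' ^ κ = -I := by
    rw [hζ'def, ← pow_mul, show (2 * κ + 1) * κ = n * j + 3 * κ by rw [hn, hj]; ring,
      pow_add, pow_mul, hζn, one_pow, one_mul,
      show 3 * κ = κ * 3 by ring, pow_mul, hζκI]
    simp [pow_succ, Complex.I_sq]
  have hEζ : ℚ⟮ζκ⟯ ≤ ℚ⟮ζ⟯ := by
    rw [IntermediateField.adjoin_simple_le_iff, hζκdef]
    exact pow_mem (IntermediateField.mem_adjoin_simple_self ℚ ζ) 4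
  have hKζ : K ≤ ℚ⟮ζ⟯ := le_trans hKE hEζ
  set x : ℚ⟮ζ⟯ := IntermediateField.AdjoinSimple.gen ℚ ζ with hxdef
  have hwc : ∀ h : c ∈ ℚ⟮ζ⟯, (⟨c, h⟩ : ℚ⟮ζ⟯) = (x ^ 4 + (x ^ 4)⁻¹) / 2 :=
    fun h => Subtype.ext hcval
  have hτcomp : τ.comp (IntermediateField.inclusion hKζ) = K.val := by
    apply IntermediateField.algHom_ext_of_eq_adjoin _ hK
    rintro y hy
    obtain rfl : y = c := Set.mem_singleton_iff.mp hy
    show τ (IntermediateField.inclusion hKζ _) = _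
    have : IntermediateField.inclusion hKζ ⟨c, IntermediateField.subset_adjoin ℚ {c} rfl⟩
        = (x ^ 4 + (x ^ 4)⁻¹) / 2 := by
      rw [show IntermediateField.inclusion hKζ ⟨c, _⟩ = ⟨c, hKζ (IntermediateField.subset_adjoin ℚ {c} rfl)⟩ from rfl]
      exact hwc _
    rw [this]
    simp only [map_div₀, map_add, map_inv₀, map_pow, map_ofNat, hτgen]
    show _ = (c : ℂ)
    rw [hp4, ← hζκdef, ← hcval]
  have hτfix : ∀ z : K, τ (IntermediateField.inclusion hKζ z) = (z : ℂ) := by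
    intro z
    exact congrFun (congrArg DFunLike.coe hτcomp) z
  have hsnot : sC ∉ K := by
    intro hmem
    set z : K := (⟨sC, hmem⟩ : K) with hzdef
    have h1 : τ (IntermediateField.inclusion hKζ z) = sC := hτfix z
    have hw2 : IntermediateField.inclusion hKζ z = ((x ^ 2)⁻¹ - x ^ 2) * x ^ κ / 2 := by
      apply Subtype.ext
      show sC = ((ζ ^ 2)⁻¹ - ζ ^ 2) * ζ ^ κ / 2
      rw [hζκI]
      exact hsval
    have h2 : τ (IntermediateField.inclusion hKζ z) = -sC := by
      rw [hw2]
      simp only [map_div₀, map_mul, map_sub, map_inv₀, map_pow, map_ofNat, hτgen]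
      rw [hp2, hpκ, hsval]
      ring
    rw [h1] at h2
    have hs0 : sC = 0 := by linear_combination h2 / 2
    have hsin : 0 < Real.sin (Real.pi / κ) := by
      apply Real.sin_pos_of_pos_of_lt_pi
      · positivity
      · apply div_lt_self Real.pi_pos
        exact_mod_cast (by omega : 1 < κ)
    rw [hsCdef, Complex.ofReal_eq_zero] at hs0
    linarith
  exact ⟨hKfin, hsnot⟩

/-- For an odd prime `κ ≥ 3`, `[ℚ(sin(π/κ)) : ℚ(sin²(π/κ))] = 2` and
`[ℚ(sin²(π/κ)) : ℚ] = (κ-1)/2`. -/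
theorem stmt17 (κ : ℕ) (hκ : κ.Prime) (hodd : Odd κ) (h3 : 3 ≤ κ)
    (s t : ℝ) (hs : s = Real.sin (Real.pi / κ)) (ht : t = s ^ 2) :
    Module.finrank ℚ⟮t⟯ ℚ⟮t⟯⟮s⟯ = 2 ∧
    Module.finrank ℚ ℚ⟮t⟯ = (κ - 1) / 2 := by
  obtain ⟨hkey1, hkey2⟩ := key17 κ hκ hodd h3 _ _ rfl rfl
  set cr : ℝ := Real.cos (2 * Real.pi / κ) with hcr
  have htval : t = 1 / 2 - cr / 2 := by
    rw [ht, hs, hcr, show 2 * Real.pi / κ = 2 * (Real.pi / κ) by ring,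
      Real.sin_sq_eq_half_sub]
  have hQt : ℚ⟮t⟯ = ℚ⟮cr⟯ := by
    apply le_antisymm <;> rw [IntermediateField.adjoin_simple_le_iff]
    · rw [htval]
      have hg := IntermediateField.mem_adjoin_simple_self ℚ cr
      exact sub_mem (div_mem (one_mem _) (ofNat_mem _ 2)) (div_mem hg (ofNat_mem _ 2))
    · have hg := IntermediateField.mem_adjoin_simple_self ℚ t
      have : cr = 1 - 2 * t := by rw [htval]; ring
      rw [this]
      exact sub_mem (one_mem _) (mul_mem (ofNat_mem _ 2) hg)
  set f : ℝ →ₐ[ℚ] ℂ := Complex.ofRealHom.toRatAlgHom with hf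
  have hmap : (ℚ⟮cr⟯).map f = ℚ⟮((cr : ℝ) : ℂ)⟯ := by
    rw [IntermediateField.adjoin_map, Set.image_singleton]
    rfl
  have hfin2 : Module.finrank ℚ ℚ⟮t⟯ = (κ - 1) / 2 := by
    rw [hQt]
    rw [(IntermediateField.equivMap ℚ⟮cr⟯ f).toLinearEquiv.finrank_eq, hmap]
    exact hkey1
  refine ⟨?_, hfin2⟩
  have hsnotR : s ∉ ℚ⟮t⟯ := by
    intro hmem
    have hmapmem : f s ∈ (ℚ⟮t⟯).map f := by
      exact ⟨s, hmem, rfl⟩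
    rw [hQt, hmap] at hmapmem
    rw [hs] at hmapmem
    exact hkey2 hmapmem
  refine quad_finrank s 0 (-(IntermediateField.AdjoinSimple.gen ℚ t)) ?_ ?_
  · rw [map_zero, map_neg, IntermediateField.AdjoinSimple.algebraMap_gen, ht]
    ring
  · rintro ⟨y, hy⟩
    exact hsnotR (hy ▸ y.2)
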